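/- The Integral Squared Error between two univariate Gaussian mixtures has the closed form D_ISE(p, q) = wᵀ S_OO w - 2 wᵀ S_OR v + vᵀ S_RR v, where p = ∑_{n=1}^N w_n φ(·|μ_n, σ_n²), q = ∑_{m=1}^M v_m φ(·|ν_m, τ_m²), (S_OO)_{nn'} = φ(μ_n | μ_{n'}, σ_n² + σ_{n'}²), (S_OR)_{nm} = φ(μ_n | ν_m, σ_n² + τ_m²), and (S_RR)_{mm'} = φ(ν_m | ν_{m'}, τ_m² + τ_{m'}²). -/

import Mathlib

open MeasureTheory Finset

/-- The univariate Gaussian density with mean `m` and variance `v`. -/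
noncomputable def gpdf (m v x : ℝ) : ℝ :=
  (Real.sqrt (2 * Real.pi * v))⁻¹ * Real.exp (-(x - m) ^ 2 / (2 * v))

lemma gpdf_eq (m v : ℝ) (hv : 0 ≤ v) :
    gpdf m v = ProbabilityTheory.gaussianPDFReal m ⟨v, hv⟩ := by
  funext x
  simp [gpdf, ProbabilityTheory.gaussianPDFReal, neg_div]
  rfl

lemma gpdf_integrable (m v : ℝ) (hv : 0 < v) : Integrable (gpdf m v) := by
  rw [gpdf_eq m v hv.le]
  exact ProbabilityTheory.integrable_gaussianPDFReal m _

lemma gpdf_integral_one (m v : ℝ) (hv : 0 < v) : ∫ x, gpdf m v x = 1 := by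
  rw [gpdf_eq m v hv.le]
  exact ProbabilityTheory.integral_gaussianPDFReal_eq_one m (by
    intro h
    exact hv.ne' (congrArg NNReal.toReal h))

lemma gpdf_symm (a b v : ℝ) : gpdf a v b = gpdf b v a := by
  simp only [gpdf]
  ring_nf

lemma gpdf_mul (m1 m2 v1 v2 : ℝ) (h1 : 0 < v1) (h2 : 0 < v2) (x : ℝ) :
    gpdf m1 v1 x * gpdf m2 v2 x =
      gpdf m2 (v1 + v2) m1 *
        gpdf ((m1 * v2 + m2 * v1) / (v1 + v2)) (v1 * v2 / (v1 + v2)) x := by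
  have h12 : 0 < v1 + v2 := by linarith
  simp only [gpdf]
  rw [mul_mul_mul_comm, mul_mul_mul_comm _ (Real.exp _), ← Real.exp_add, ← Real.exp_add]
  congr 1
  · rw [← mul_inv, ← mul_inv, ← Real.sqrt_mul (by positivity), ← Real.sqrt_mul (by positivity)]
    congr 1
    field_simp
  · rw [Real.exp_eq_exp]
    field_simp
    ring

lemma key {ι : Type*} [Fintype ι] (c a b : ι → ℝ) (hb : ∀ i, 0 < b i) :
    (∫ x : ℝ, (∑ i, c i * gpdf (a i) (b i) x) ^ 2)
      = ∑ i, ∑ j, c i * gpdf (a j) (b i + b j) (a i) * c j := by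
  have hmul : ∀ i j, (fun x => c i * gpdf (a i) (b i) x * (c j * gpdf (a j) (b j) x))
      = fun x => (c i * gpdf (a j) (b i + b j) (a i) * c j) *
        gpdf ((a i * b j + a j * b i) / (b i + b j)) (b i * b j / (b i + b j)) x := by
    intro i j
    funext x
    rw [mul_mul_mul_comm, gpdf_mul _ _ _ _ (hb i) (hb j)]
    ring
  have hint : ∀ i j, Integrable
      (fun x => c i * gpdf (a i) (b i) x * (c j * gpdf (a j) (b j) x)) := by
    intro i j
    rw [hmul i j]
    exact (gpdf_integrable _ _ (div_pos (mul_pos (hb i) (hb j)) (by linarith [hb i, hb j]))).const_mul _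
  calc (∫ x : ℝ, (∑ i, c i * gpdf (a i) (b i) x) ^ 2)
      = ∫ x : ℝ, ∑ i, ∑ j, c i * gpdf (a i) (b i) x * (c j * gpdf (a j) (b j) x) := by
        congr 1
        funext x
        rw [sq, Finset.sum_mul_sum]
    _ = ∑ i, ∑ j, ∫ x : ℝ, c i * gpdf (a i) (b i) x * (c j * gpdf (a j) (b j) x) := by
        rw [integral_finset_sum _ fun i _ => integrable_finset_sum _ fun j _ => hint i j]
        exact Finset.sum_congr rfl fun i _ =>
          integral_finset_sum _ fun j _ => hint i j
    _ = ∑ i, ∑ j, c i * gpdf (a j) (b i + b j) (a i) * c j := by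
        refine Finset.sum_congr rfl fun i _ => Finset.sum_congr rfl fun j _ => ?_
        rw [hmul i j, integral_const_mul, gpdf_integral_one _ _ (div_pos (mul_pos (hb i) (hb j)) (by linarith [hb i, hb j])), mul_one]

/-- closed form of the ISE between two univariate Gaussian mixtures:
`D_ISE(p,q) = wᵀ S_OO w - 2 wᵀ S_OR v + vᵀ S_RR v`. -/
theorem stmt_9 (N M : ℕ)
    (w : Fin N → ℝ) (μ : Fin N → ℝ) (s : Fin N → ℝ) (hs : ∀ n, 0 < s n)
    (v : Fin M → ℝ) (ν : Fin M → ℝ) (t : Fin M → ℝ) (ht : ∀ m, 0 < t m) :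
    (∫ x : ℝ, ((∑ n, w n * gpdf (μ n) (s n) x) - ∑ m, v m * gpdf (ν m) (t m) x) ^ 2)
      = (∑ n, ∑ n', w n * gpdf (μ n') (s n + s n') (μ n) * w n')
        - 2 * (∑ n, ∑ m, w n * gpdf (ν m) (s n + t m) (μ n) * v m)
        + ∑ m, ∑ m', v m * gpdf (ν m') (t m + t m') (ν m) * v m' := by
  have h := key (Sum.elim w (fun m => -v m)) (Sum.elim μ ν) (Sum.elim s t)
    (by rintro (n | m) <;> simp [hs, ht, (ht _)])
  have hfun : ∀ x : ℝ, (∑ i : Fin N ⊕ Fin M, Sum.elim w (fun m => -v m) i *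
        gpdf (Sum.elim μ ν i) (Sum.elim s t i) x)
      = (∑ n, w n * gpdf (μ n) (s n) x) - ∑ m, v m * gpdf (ν m) (t m) x := by
    intro x
    rw [Fintype.sum_sum_type]
    simp [sub_eq_add_neg, Finset.sum_neg_distrib]
  rw [show (∫ x : ℝ, ((∑ n, w n * gpdf (μ n) (s n) x) - ∑ m, v m * gpdf (ν m) (t m) x) ^ 2)
      = ∫ x : ℝ, (∑ i : Fin N ⊕ Fin M, Sum.elim w (fun m => -v m) i *
        gpdf (Sum.elim μ ν i) (Sum.elim s t i) x) ^ 2 by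
      congr 1; funext x; rw [hfun x]]
  rw [h, Fintype.sum_sum_type]
  simp only [Fintype.sum_sum_type, Sum.elim_inl, Sum.elim_inr]
  have hcross : ∀ (m : Fin M) (n : Fin N),
      -v m * gpdf (μ n) (t m + s n) (ν m) * w n
        = -(w n * gpdf (ν m) (s n + t m) (μ n) * v m) := by
    intro m n
    rw [gpdf_symm, add_comm (t m) (s n)]
    ring
  have h2 : (∑ m, ∑ n, -v m * gpdf (μ n) (t m + s n) (ν m) * w n)
      = -∑ n, ∑ m, w n * gpdf (ν m) (s n + t m) (μ n) * v m := by
    rw [Finset.sum_comm]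
    simp only [hcross]
    simp [Finset.sum_neg_distrib]
  have h1 : (∑ n, ∑ m, w n * gpdf (ν m) (s n + t m) (μ n) * -v m)
      = -∑ n, ∑ m, w n * gpdf (ν m) (s n + t m) (μ n) * v m := by
    simp [Finset.sum_neg_distrib, mul_neg]
  have h3 : (∑ m, ∑ m', -v m * gpdf (ν m') (t m + t m') (ν m) * -v m')
      = ∑ m, ∑ m', v m * gpdf (ν m') (t m + t m') (ν m) * v m' := by
    refine Finset.sum_congr rfl fun m _ => Finset.sum_congr rfl fun m' _ => by ring
  rw [Finset.sum_add_distrib, Finset.sum_add_distrib, h1, h2, h3]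
  ring
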